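/- Let q ≥ 2, w ≥ 1 and d be integers with d odd and 1 ≤ d ≤ 2w-1, and set t = (2w-d+1)/2. Then for every integer n ≥ w one has A_q(n,d,w) ≤ (q-1)^t·C(n,t)/C(w,t), where C(a,b) denotes the binomial coefficient. -/

import Mathlib

open Finset

/-- The weight of a vector: the number of nonzero coordinates. -/
def wtv {n : ℕ} (x : Fin n → ℕ) : ℕ := (univ.filter fun i => x i ≠ 0).card

/-- `C` is an `(n,d,w)_q` constant weight code: a code over the alphabet `{0,...,q-1}`
of length `n`, constant weight `w`, and minimum Hamming distance at least `d`. -/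
def IsCWC (q n d w : ℕ) (C : Finset (Fin n → ℕ)) : Prop :=
  (∀ x ∈ C, ∀ i, x i < q) ∧ (∀ x ∈ C, wtv x = w) ∧
  (∀ x ∈ C, ∀ y ∈ C, x ≠ y → d ≤ hammingDist x y)

/-- `Aq q n d w` is the maximum size of an `(n,d,w)_q` constant weight code. -/
noncomputable def Aq (q n d w : ℕ) : ℕ :=
  sSup {m | ∃ C : Finset (Fin n → ℕ), IsCWC q n d w C ∧ C.card = m}

/-- the support of a vector -/
def suppv {n : ℕ} (x : Fin n → ℕ) : Finset (Fin n) := univ.filter fun i => x i ≠ 0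

lemma wtv_eq {n : ℕ} (x : Fin n → ℕ) : wtv x = (suppv x).card := rfl

lemma hamming_eq {n : ℕ} (x y : Fin n → ℕ) :
    hammingDist x y = (univ.filter fun i => x i ≠ y i).card := rfl

/-- set of `t`-patterns -/
def Pats (q n t : ℕ) : Finset (Fin n → ℕ) :=
  (Fintype.piFinset fun _ : Fin n => Finset.range q).filter fun v => wtv v = t

/-- patterns compatible with x -/
def subPats (q n t : ℕ) (x : Fin n → ℕ) : Finset (Fin n → ℕ) :=
  (Pats q n t).filter fun v => ∀ i, v i ≠ 0 → v i = x i

lemma card_subPats {q n t w : ℕ} (hq : 1 ≤ q) (ht : t ≤ w) (x : Fin n → ℕ)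
    (hxq : ∀ i, x i < q) (hxw : wtv x = w) : (subPats q n t x).card = w.choose t := by
  have h : (subPats q n t x).card = ((suppv x).powersetCard t).card := by
    apply Finset.card_bij' (fun v _ => suppv v)
      (fun S _ => fun i => if i ∈ S then x i else 0)
    · intro v hv
      simp only [subPats, Pats, Finset.mem_filter, Fintype.mem_piFinset,
        Finset.mem_range] at hv
      obtain ⟨⟨_, hvt⟩, hsub⟩ := hv
      rw [Finset.mem_powersetCard]
      constructor
      · intro i hi
        simp only [suppv, Finset.mem_filter, Finset.mem_univ, true_and] at hi ⊢
        rw [← hsub i hi]; exact hi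
      · rw [← wtv_eq]; exact hvt
    · intro S hS
      rw [Finset.mem_powersetCard] at hS
      obtain ⟨hSsub, hSt⟩ := hS
      simp only [subPats, Pats, Finset.mem_filter, Fintype.mem_piFinset, Finset.mem_range]
      refine ⟨⟨fun i => ?_, ?_⟩, fun i hi => ?_⟩
      · by_cases h : i ∈ S
        · simpa [h] using hxq i
        · simp [h]; omega
      · rw [wtv_eq]
        have : suppv (fun i => if i ∈ S then x i else 0) = S := by
          ext i
          simp only [suppv, Finset.mem_filter, Finset.mem_univ, true_and]
          by_cases h : i ∈ S
          · have := hSsub h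
            simp only [suppv, Finset.mem_filter, Finset.mem_univ, true_and] at this
            simp [h, this]
          · simp [h]
        rw [this, hSt]
      · by_cases h : i ∈ S
        · simp [h]
        · simp [h] at hi
    · intro v hv
      simp only [subPats, Pats, Finset.mem_filter] at hv
      funext i
      by_cases h : i ∈ suppv v
      · simp only [suppv, Finset.mem_filter, Finset.mem_univ, true_and] at h
        simp only [suppv, Finset.mem_filter, Finset.mem_univ, true_and, if_pos h]
        exact (hv.2 i h).symm
      · simp only [suppv, Finset.mem_filter, Finset.mem_univ, true_and, not_not] at h
        simp [suppv, h]
    · intro S hS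
      rw [Finset.mem_powersetCard] at hS
      ext i
      simp only [suppv, Finset.mem_filter, Finset.mem_univ, true_and]
      by_cases h : i ∈ S
      · have := hS.1 h
        simp only [suppv, Finset.mem_filter, Finset.mem_univ, true_and] at this
        simp [h, this]
      · simp [h]
  rw [h, Finset.card_powersetCard, ← wtv_eq, hxw]

lemma card_Pats_le {q t : ℕ} (hq : 1 ≤ q) (n : ℕ) :
    (Pats q n t).card ≤ (q - 1) ^ t * n.choose t := by
  have hsub : Pats q n t ⊆ (Finset.powersetCard t (univ : Finset (Fin n))).biUnion
      (fun S => Fintype.piFinset fun i => if i ∈ S then Finset.Ico 1 q else {0}) := by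
    intro v hv
    simp only [Pats, Finset.mem_filter, Fintype.mem_piFinset, Finset.mem_range] at hv
    obtain ⟨hvq, hvt⟩ := hv
    rw [Finset.mem_biUnion]
    refine ⟨suppv v, ?_, ?_⟩
    · rw [Finset.mem_powersetCard]
      exact ⟨Finset.subset_univ _, by rw [← wtv_eq]; exact hvt⟩
    · rw [Fintype.mem_piFinset]
      intro i
      by_cases h : i ∈ suppv v
      · simp only [suppv, Finset.mem_filter, Finset.mem_univ, true_and] at h
        simp only [suppv, Finset.mem_filter, Finset.mem_univ, true_and, if_pos h,
          Finset.mem_Ico]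
        exact ⟨Nat.one_le_iff_ne_zero.mpr h, hvq i⟩
      · simp only [suppv, Finset.mem_filter, Finset.mem_univ, true_and, not_not] at h
        simp [suppv, h]
    
  calc (Pats q n t).card ≤ _ := Finset.card_le_card hsub
    _ ≤ ∑ S ∈ Finset.powersetCard t (univ : Finset (Fin n)),
        (Fintype.piFinset fun i => if i ∈ S then Finset.Ico 1 q else {0}).card :=
      Finset.card_biUnion_le
    _ = ∑ S ∈ Finset.powersetCard t (univ : Finset (Fin n)), (q - 1) ^ t := by
      apply Finset.sum_congr rfl
      intro S hS
      rw [Finset.mem_powersetCard] at hS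
      rw [Fintype.card_piFinset]
      have : ∀ i : Fin n, ((if i ∈ S then Finset.Ico 1 q else {0}) : Finset ℕ).card
          = if i ∈ S then q - 1 else 1 := by
        intro i; by_cases h : i ∈ S <;> simp [h]
      simp_rw [this]
      rw [Finset.prod_ite_mem, Finset.univ_inter, Finset.prod_const, hS.2]
    _ = (q - 1) ^ t * n.choose t := by
      rw [Finset.sum_const, Finset.card_powersetCard, Finset.card_univ,
        Fintype.card_fin, smul_eq_mul, mul_comm]

theorem stmt6 (q w d t : ℕ) (hq : 2 ≤ q) (hw : 1 ≤ w) (hodd : Odd d)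
    (hd1 : 1 ≤ d) (hd2 : d ≤ 2 * w - 1) (ht : 2 * t = 2 * w - d + 1) :
    ∀ n : ℕ, w ≤ n →
      (Aq q n d w : ℝ) ≤ ((q : ℝ) - 1) ^ t * (Nat.choose n t : ℝ) / (Nat.choose w t : ℝ) := by
  intro n hn
  have htw : t ≤ w := by omega
  have hdt : d + 2 * t = 2 * w + 1 := by omega
  have hwt : 0 < w.choose t := Nat.choose_pos htw
  -- key counting bound for any code
  have key : ∀ C : Finset (Fin n → ℕ), IsCWC q n d w C →
      C.card * w.choose t ≤ (q - 1) ^ t * n.choose t := by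
    intro C hC
    obtain ⟨hCq, hCw, hCd⟩ := hC
    have hdisj : ∀ x ∈ C, ∀ y ∈ C, x ≠ y → Disjoint (subPats q n t x) (subPats q n t y) := by
      intro x hx y hy hxy
      rw [Finset.disjoint_left]
      intro v hvx hvy
      simp only [subPats, Pats, Finset.mem_filter] at hvx hvy
      obtain ⟨⟨_, hvt⟩, hvsx⟩ := hvx
      obtain ⟨_, hvsy⟩ := hvy
      -- supp v ⊆ suppv x ∩ suppv y, and x = y on supp v
      have hA : suppv v ⊆ suppv x ∩ suppv y := by
        intro i hi
        simp only [suppv, Finset.mem_filter, Finset.mem_univ, true_and] at hi ⊢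
        rw [Finset.mem_inter]
        simp only [Finset.mem_filter, Finset.mem_univ, true_and, suppv]
        exact ⟨by rw [← hvsx i hi]; exact hi, by rw [← hvsy i hi]; exact hi⟩
      have hD : (univ.filter fun i => x i ≠ y i) ⊆ (suppv x ∪ suppv y) \ suppv v := by
        intro i hi
        simp only [Finset.mem_filter, Finset.mem_univ, true_and] at hi
        rw [Finset.mem_sdiff, Finset.mem_union]
        constructor
        · simp only [suppv, Finset.mem_filter, Finset.mem_univ, true_and]
          by_contra h
          push_neg at h
          exact hi (h.1.trans h.2.symm)
        · intro hiv
          simp only [suppv, Finset.mem_filter, Finset.mem_univ, true_and] at hiv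
          exact hi ((hvsx i hiv).symm.trans (hvsy i hiv))
      have h1 : ((suppv x ∪ suppv y) \ suppv v).card + (suppv v).card
          = (suppv x ∪ suppv y).card :=
        Finset.card_sdiff_add_card_eq_card (hA.trans Finset.inter_subset_union)
      have h2 : (suppv x ∪ suppv y).card + (suppv x ∩ suppv y).card
          = (suppv x).card + (suppv y).card := Finset.card_union_add_card_inter _ _
      have h3 : (suppv v).card ≤ (suppv x ∩ suppv y).card := Finset.card_le_card hA
      have h4 : d ≤ hammingDist x y := hCd x hx y hy hxy
      rw [hamming_eq] at h4
      have h5 := Finset.card_le_card hD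
      have hx' : (suppv x).card = w := by rw [← wtv_eq]; exact hCw x hx
      have hy' : (suppv y).card = w := by rw [← wtv_eq]; exact hCw y hy
      have hv' : (suppv v).card = t := by rw [← wtv_eq]; exact hvt
      omega
    have h1 : C.card * w.choose t = ∑ x ∈ C, (subPats q n t x).card := by
      rw [Finset.sum_congr rfl fun x hx =>
        card_subPats (by omega) htw x (hCq x hx) (hCw x hx)]
      rw [Finset.sum_const, smul_eq_mul]
    have h2 : ∑ x ∈ C, (subPats q n t x).card = (C.biUnion (subPats q n t)).card :=
      (Finset.card_biUnion hdisj).symm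
    have h3 : C.biUnion (subPats q n t) ⊆ Pats q n t := by
      intro v hv
      rw [Finset.mem_biUnion] at hv
      obtain ⟨x, _, hvx⟩ := hv
      exact Finset.mem_of_mem_filter v hvx
    calc C.card * w.choose t = (C.biUnion (subPats q n t)).card := by rw [h1, h2]
      _ ≤ (Pats q n t).card := Finset.card_le_card h3
      _ ≤ (q - 1) ^ t * n.choose t := card_Pats_le (by omega) n
  -- bound Aq by a natural number
  have hAq : Aq q n d w ≤ ((q - 1) ^ t * n.choose t) / w.choose t := by
    apply csSup_le
    · exact ⟨0, ∅, ⟨by simp, by simp, by simp⟩, rfl⟩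
    · rintro m ⟨C, hC, rfl⟩
      rw [Nat.le_div_iff_mul_le hwt]
      exact key C hC
  calc (Aq q n d w : ℝ) ≤ (((q - 1) ^ t * n.choose t) / w.choose t : ℕ) := by
        exact_mod_cast hAq
    _ ≤ (((q - 1) ^ t * n.choose t : ℕ) : ℝ) / ((w.choose t : ℕ) : ℝ) := Nat.cast_div_le
    _ = ((q : ℝ) - 1) ^ t * (Nat.choose n t : ℝ) / (Nat.choose w t : ℝ) := by
        push_cast [Nat.cast_sub (by omega : 1 ≤ q)]
        ring
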